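/- Let (A, ζ_A) and (B, ζ_B) be Hom-algebras with ζ_A, ζ_B bijective, V a linear space with ζ_V : V → V bijective, and endow A ⊗ V with left A-module structure m_A ⊗ ζ_V. Then right B-module structures μ on A ⊗ V making (A ⊗ V, ζ_A ⊗ ζ_V) an (A,B)-bimodule are in bijection with linear maps f : V ⊗ B → A ⊗ V satisfying (i) (m_A ⊗ ζ_V)(A ⊗ f)(A ⊗ ζ_V^{-1} ⊗ B)(f ⊗ B) = f(ζ_V ⊗ m_B), (ii) f(V ⊗ η_B) = η_A ⊗ ζ_V, (iii) f(ζ_V^{-1} ⊗ ζ_B^{-1}) = (ζ_A^{-1} ⊗ ζ_V^{-1})f; the bijection sends μ to f = μ(η_A ⊗ V ⊗ B) and f to μ = (m_A ⊗ ζ_V)(A ⊗ f)(A ⊗ ζ_V^{-1} ⊗ ζ_B^{-1}). -/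

import Mathlib

open TensorProduct

namespace HomHopf

variable (k : Type) [Field k]

/-- A Hom-algebra. -/
structure HomAlg (A : Type) [AddCommGroup A] [Module k A] : Type where
  mul : A →ₗ[k] A →ₗ[k] A
  one : A
  zmap : A →ₗ[k] A
  zmap_mul : ∀ a b, zmap (mul a b) = mul (zmap a) (zmap b)
  hom_assoc : ∀ a b c, mul (zmap a) (mul b c) = mul (mul a b) (zmap c)
  zmap_one : zmap one = one
  one_mul : ∀ a, mul one a = zmap a
  mul_one : ∀ a, mul a one = zmap a

/-- A Hom-bialgebra. -/
structure Bialg (H : Type) [AddCommGroup H] [Module k H] : Type where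
  mul : H →ₗ[k] H →ₗ[k] H
  one : H
  comul : H →ₗ[k] H ⊗[k] H
  counit : H →ₗ[k] k
  bmap : H →ₗ[k] H
  bmap_mul : ∀ a b, bmap (mul a b) = mul (bmap a) (bmap b)
  hom_assoc : ∀ a b c, mul (bmap a) (mul b c) = mul (mul a b) (bmap c)
  bmap_one : bmap one = one
  one_mul : ∀ a, mul one a = bmap a
  mul_one : ∀ a, mul a one = bmap a
  comul_bmap : ∀ c, comul (bmap c) = TensorProduct.map bmap bmap (comul c)
  coassoc : ∀ c, TensorProduct.map bmap comul (comul c)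
      = TensorProduct.assoc k H H H (TensorProduct.map comul bmap (comul c))
  counit_bmap : ∀ c, counit (bmap c) = counit c
  counit_comul : ∀ c,
      TensorProduct.lid k H (TensorProduct.map counit LinearMap.id (comul c)) = bmap c
  comul_counit : ∀ c,
      TensorProduct.rid k H (TensorProduct.map LinearMap.id counit (comul c)) = bmap c
  comul_mul : ∀ a b, comul (mul a b) = TensorProduct.map₂ mul mul (comul a) (comul b)
  comul_one : comul one = one ⊗ₜ[k] one
  counit_mul : ∀ a b, counit (mul a b) = counit a * counit b
  counit_one : counit one = 1

/-- A Hom-Hopf algebra. -/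
structure Hopf (H : Type) [AddCommGroup H] [Module k H] extends Bialg k H where
  S : H →ₗ[k] H
  S_mul_id : ∀ h,
      TensorProduct.lift mul (TensorProduct.map S LinearMap.id (comul h)) = counit h • one
  id_mul_S : ∀ h,
      TensorProduct.lift mul (TensorProduct.map LinearMap.id S (comul h)) = counit h • one
  S_bmap : ∀ h, S (bmap h) = bmap (S h)

variable {H : Type} [AddCommGroup H] [Module k H]
variable {M N P V W U : Type}
  [AddCommGroup M] [Module k M] [AddCommGroup N] [Module k N]
  [AddCommGroup P] [Module k P] [AddCommGroup V] [Module k V]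
  [AddCommGroup W] [Module k W] [AddCommGroup U] [Module k U]

/-- Left Hom-module. -/
structure IsLMod (A : Bialg k H) (ζ : M →ₗ[k] M) (act : H →ₗ[k] M →ₗ[k] M) : Prop where
  assoc : ∀ a b m, act (A.bmap a) (act b m) = act (A.mul a b) (ζ m)
  zeta_act : ∀ a m, ζ (act a m) = act (A.bmap a) (ζ m)
  one_act : ∀ m, act A.one m = ζ m

/-- Right Hom-module. -/
structure IsRMod (A : Bialg k H) (ζ : M →ₗ[k] M) (ract : M →ₗ[k] H →ₗ[k] M) : Prop where
  assoc : ∀ m a b, ract (ract m a) (A.bmap b) = ract (ζ m) (A.mul a b)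
  zeta_act : ∀ m a, ζ (ract m a) = ract (ζ m) (A.bmap a)
  act_one : ∀ m, ract m A.one = ζ m

/-- Left Hom-module over a plain Hom-algebra structure (given by raw data). -/
structure IsLModOf {A : Type} [AddCommGroup A] [Module k A]
    (mul : A →ₗ[k] A →ₗ[k] A) (one : A) (zmap : A →ₗ[k] A)
    (ζ : M →ₗ[k] M) (act : A →ₗ[k] M →ₗ[k] M) : Prop where
  assoc : ∀ a b m, act (zmap a) (act b m) = act (mul a b) (ζ m)
  zeta_act : ∀ a m, ζ (act a m) = act (zmap a) (ζ m)
  one_act : ∀ m, act one m = ζ m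

/-- Right Hom-module over a plain Hom-algebra structure. -/
structure IsRModOf {A : Type} [AddCommGroup A] [Module k A]
    (mul : A →ₗ[k] A →ₗ[k] A) (one : A) (zmap : A →ₗ[k] A)
    (ζ : M →ₗ[k] M) (ract : M →ₗ[k] A →ₗ[k] M) : Prop where
  assoc : ∀ m a b, ract (ract m a) (zmap b) = ract (ζ m) (mul a b)
  zeta_act : ∀ m a, ζ (ract m a) = ract (ζ m) (zmap a)
  act_one : ∀ m, ract m one = ζ m

/-- Left Hom-comodule. -/
structure IsLCom (A : Bialg k H) (ζ : M →ₗ[k] M) (ρ : M →ₗ[k] H ⊗[k] M) : Prop where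
  coact_zeta : ∀ m, ρ (ζ m) = TensorProduct.map A.bmap ζ (ρ m)
  counit_coact : ∀ m, TensorProduct.lid k M (TensorProduct.map A.counit LinearMap.id (ρ m)) = ζ m
  coassoc : ∀ m, TensorProduct.map A.bmap ρ (ρ m)
      = TensorProduct.assoc k H H M (TensorProduct.map A.comul ζ (ρ m))

/-- Right Hom-comodule. -/
structure IsRCom (A : Bialg k H) (ζ : M →ₗ[k] M) (ρ : M →ₗ[k] M ⊗[k] H) : Prop where
  coact_zeta : ∀ m, ρ (ζ m) = TensorProduct.map ζ A.bmap (ρ m)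
  coact_counit : ∀ m, TensorProduct.rid k M (TensorProduct.map LinearMap.id A.counit (ρ m)) = ζ m
  coassoc : ∀ m, TensorProduct.map ρ A.bmap (ρ m)
      = (TensorProduct.assoc k M H H).symm (TensorProduct.map ζ A.comul (ρ m))

/-- `(h·m)_{[-1]} ⊗ (h·m)_{[0]} = h_1 m_{[-1]} ⊗ h_2 · m_{[0]}`. -/
def LLcompat (A : Bialg k H) (act : H →ₗ[k] M →ₗ[k] M) (ρ : M →ₗ[k] H ⊗[k] M) : Prop :=
  ∀ h m, ρ (act h m) = TensorProduct.map₂ A.mul act (A.comul h) (ρ m)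

/-- `(h·m)_{(0)} ⊗ (h·m)_{(1)} = h_1 · m_{(0)} ⊗ h_2 m_{(1)}`. -/
def LRcompat (A : Bialg k H) (act : H →ₗ[k] M →ₗ[k] M) (ρ : M →ₗ[k] M ⊗[k] H) : Prop :=
  ∀ h m, ρ (act h m) = TensorProduct.map₂ act A.mul (A.comul h) (ρ m)

/-- `(m·h)_{[-1]} ⊗ (m·h)_{[0]} = m_{[-1]} h_1 ⊗ m_{[0]} · h_2`. -/
def RLcompat (A : Bialg k H) (ract : M →ₗ[k] H →ₗ[k] M) (ρ : M →ₗ[k] H ⊗[k] M) : Prop :=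
  ∀ m h, ρ (ract m h) = TensorProduct.map₂ A.mul ract (ρ m) (A.comul h)

/-- `(m·h)_{(0)} ⊗ (m·h)_{(1)} = m_{(0)} · h_1 ⊗ m_{(1)} h_2`. -/
def RRcompat (A : Bialg k H) (ract : M →ₗ[k] H →ₗ[k] M) (ρ : M →ₗ[k] M ⊗[k] H) : Prop :=
  ∀ m h, ρ (ract m h) = TensorProduct.map₂ ract A.mul (ρ m) (A.comul h)

/-- Four-angle H-Hopf module. -/
structure IsFourAngle (A : Hopf k H) (ζ : M →ₗ[k] M)
    (lact : H →ₗ[k] M →ₗ[k] M) (ract : M →ₗ[k] H →ₗ[k] M)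
    (ρl : M →ₗ[k] H ⊗[k] M) (ρr : M →ₗ[k] M ⊗[k] H) : Prop where
  lmod : IsLMod k A.toBialg ζ lact
  rmod : IsRMod k A.toBialg ζ ract
  bimod : ∀ a m b, lact (A.bmap a) (ract m b) = ract (lact a m) (A.bmap b)
  lcom : IsLCom k A.toBialg ζ ρl
  rcom : IsRCom k A.toBialg ζ ρr
  bicom : ∀ m, TensorProduct.map A.bmap ρr (ρl m)
      = TensorProduct.assoc k H M H (TensorProduct.map ρl A.bmap (ρr m))
  cll : LLcompat k A.toBialg lact ρl
  clr : LRcompat k A.toBialg lact ρr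
  crl : RLcompat k A.toBialg ract ρl
  crr : RRcompat k A.toBialg ract ρr

/-- Yetter–Drinfel'd compatibility, stated via arbitrary finite representations of `Δ(h)`. -/
def ydCompat (A : Bialg k H) (ract : V →ₗ[k] H →ₗ[k] V) (ρ : V →ₗ[k] V ⊗[k] H) : Prop :=
  ∀ (v : V) (h : H) (ι : Type) (s : Finset ι) (h1 h2 : ι → H),
    A.comul h = ∑ i ∈ s, h1 i ⊗ₜ[k] h2 i →
    ∑ i ∈ s, TensorProduct.map LinearMap.id (A.mul (A.bmap (A.bmap (h1 i))))
        (ρ (ract v (h2 i)))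
      = ∑ i ∈ s, TensorProduct.map (ract.flip (A.bmap (h1 i)))
          (((A.mul.flip (A.bmap (A.bmap (h2 i)))).comp A.bmap)) (ρ v)

/-- Right-right Yetter–Drinfel'd module. -/
structure IsYD (A : Hopf k H) (ζ : V →ₗ[k] V)
    (ract : V →ₗ[k] H →ₗ[k] V) (ρ : V →ₗ[k] V ⊗[k] H) : Prop where
  rmod : IsRMod k A.toBialg ζ ract
  rcom : IsRCom k A.toBialg ζ ρ
  compat : ydCompat k A.toBialg ract ρ

/-- The braiding `c_{V,W}(v ⊗ w) = ζ_W⁻¹(w_(0)) ⊗ ζ_V⁻¹(v) ◁ β⁻²(w_(1))`. -/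
noncomputable def braid (ract : V →ₗ[k] H →ₗ[k] V) (ζVinv : V →ₗ[k] V)
    (ρ : W →ₗ[k] W ⊗[k] H) (ζWinv : W →ₗ[k] W) (βinv : H →ₗ[k] H) :
    V ⊗[k] W →ₗ[k] W ⊗[k] V :=
  (TensorProduct.map LinearMap.id (TensorProduct.lift (ract.comp ζVinv))).comp
    ((TensorProduct.leftComm k V W H).toLinearMap.comp
      (TensorProduct.map LinearMap.id ((TensorProduct.map ζWinv (βinv.comp βinv)).comp ρ)))

/-- The action on the tensor product of two YD modules:
`(v ⊗ w) ◁ h = v ◁ β⁻¹(h_1) ⊗ w ◁ β⁻¹(h_2)`. -/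
noncomputable def ydAct (A : Bialg k H) (βinv : H →ₗ[k] H)
    (ractV : V →ₗ[k] H →ₗ[k] V) (ractW : W →ₗ[k] H →ₗ[k] W) :
    V ⊗[k] W →ₗ[k] H →ₗ[k] V ⊗[k] W :=
  (TensorProduct.map₂ ractV ractW).compl₂ ((TensorProduct.map βinv βinv).comp A.comul)

/-- The coaction on the tensor product of two YD modules:
`ρ(v ⊗ w) = v_(0) ⊗ w_(0) ⊗ β⁻¹(v_(1) w_(1))`. -/
noncomputable def ydCoact (A : Bialg k H) (βinv : H →ₗ[k] H)
    (ρV : V →ₗ[k] V ⊗[k] H) (ρW : W →ₗ[k] W ⊗[k] H) :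
    V ⊗[k] W →ₗ[k] (V ⊗[k] W) ⊗[k] H :=
  (TensorProduct.map LinearMap.id (βinv.comp (TensorProduct.lift A.mul))).comp
    ((TensorProduct.tensorTensorTensorComm k V H W H).toLinearMap.comp
      (TensorProduct.map ρV ρW))


/-- The left `A`-module structure `m_A ⊗ ζ_V` on `A ⊗ V`. -/
noncomputable def lactAV {AA VV : Type} [AddCommGroup AA] [Module k AA]
    [AddCommGroup VV] [Module k VV]
    (mulA : AA →ₗ[k] AA →ₗ[k] AA) (ζV : VV →ₗ[k] VV) :
    AA →ₗ[k] (AA ⊗[k] VV) →ₗ[k] (AA ⊗[k] VV) :=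
  ((TensorProduct.mapBilinear (RingHom.id k) AA VV AA VV).flip ζV).comp mulA

/-- `f = μ ∘ (η_A ⊗ V ⊗ B)`. -/
noncomputable def fOf {AA BB VV : Type} [AddCommGroup AA] [Module k AA]
    [AddCommGroup BB] [Module k BB] [AddCommGroup VV] [Module k VV]
    (oneA : AA) (μ : (AA ⊗[k] VV) →ₗ[k] BB →ₗ[k] (AA ⊗[k] VV)) :
    VV ⊗[k] BB →ₗ[k] AA ⊗[k] VV :=
  TensorProduct.lift (μ.comp (TensorProduct.mk k AA VV oneA))

/-- `μ = (m_A ⊗ ζ_V)(A ⊗ f)(A ⊗ ζ_V⁻¹ ⊗ ζ_B⁻¹)`. -/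
noncomputable def muOf {AA BB VV : Type} [AddCommGroup AA] [Module k AA]
    [AddCommGroup BB] [Module k BB] [AddCommGroup VV] [Module k VV]
    (mulA : AA →ₗ[k] AA →ₗ[k] AA) (ζV ζVinv : VV →ₗ[k] VV) (ζBinv : BB →ₗ[k] BB)
    (f : VV ⊗[k] BB →ₗ[k] AA ⊗[k] VV) :
    (AA ⊗[k] VV) →ₗ[k] BB →ₗ[k] (AA ⊗[k] VV) :=
  TensorProduct.curry
    ((TensorProduct.map (TensorProduct.lift mulA) ζV).comp
      ((TensorProduct.assoc k AA AA VV).symm.toLinearMap.comp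
        ((TensorProduct.map LinearMap.id f).comp
          ((TensorProduct.map LinearMap.id (TensorProduct.map ζVinv ζBinv)).comp
            (TensorProduct.assoc k AA VV BB).toLinearMap))))

/-- Condition (i) of Theorem 4.1. -/
def condI {AA BB VV : Type} [AddCommGroup AA] [Module k AA]
    [AddCommGroup BB] [Module k BB] [AddCommGroup VV] [Module k VV]
    (mulA : AA →ₗ[k] AA →ₗ[k] AA) (mulB : BB →ₗ[k] BB →ₗ[k] BB)
    (ζV ζVinv : VV →ₗ[k] VV) (f : VV ⊗[k] BB →ₗ[k] AA ⊗[k] VV) : Prop :=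
  (TensorProduct.map (TensorProduct.lift mulA) ζV).comp
      ((TensorProduct.assoc k AA AA VV).symm.toLinearMap.comp
        ((TensorProduct.map LinearMap.id f).comp
          ((TensorProduct.map LinearMap.id (TensorProduct.map ζVinv LinearMap.id)).comp
            ((TensorProduct.assoc k AA VV BB).toLinearMap.comp
              (TensorProduct.map f LinearMap.id)))))
    = f.comp ((TensorProduct.map ζV (TensorProduct.lift mulB)).comp
        (TensorProduct.assoc k VV BB BB).toLinearMap)
section Aux
variable {AA BB VV : Type} [AddCommGroup AA] [Module k AA] [AddCommGroup BB] [Module k BB] [AddCommGroup VV] [Module k VV]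
-- auxiliary lemmas

lemma lactAV_tmul (mulA : AA →ₗ[k] AA →ₗ[k] AA) (ζV : VV →ₗ[k] VV)
    (a a' : AA) (v : VV) :
    lactAV k mulA ζV a (a' ⊗ₜ[k] v) = mulA a a' ⊗ₜ[k] ζV v := by
  simp [lactAV]

lemma fOf_tmul (oneA : AA) (μ : (AA ⊗[k] VV) →ₗ[k] BB →ₗ[k] (AA ⊗[k] VV))
    (v : VV) (b : BB) : fOf k oneA μ (v ⊗ₜ[k] b) = μ (oneA ⊗ₜ[k] v) b := by
  simp [fOf]

lemma map_lift_assoc_symm (mulA : AA →ₗ[k] AA →ₗ[k] AA) (ζV : VV →ₗ[k] VV)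
    (a : AA) (y : AA ⊗[k] VV) :
    TensorProduct.map (TensorProduct.lift mulA) ζV
      ((TensorProduct.assoc k AA AA VV).symm (a ⊗ₜ[k] y))
      = lactAV k mulA ζV a y := by
  induction y using TensorProduct.induction_on with
  | zero => simp
  | tmul a' v => simp [lactAV]
  | add x y hx hy => simp [tmul_add, hx, hy, map_add]

lemma muOf_tmul (mulA : AA →ₗ[k] AA →ₗ[k] AA) (ζV ζVinv : VV →ₗ[k] VV)
    (ζBinv : BB →ₗ[k] BB) (f : VV ⊗[k] BB →ₗ[k] AA ⊗[k] VV) (a : AA) (v : VV) (b : BB) :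
    muOf k mulA ζV ζVinv ζBinv f (a ⊗ₜ[k] v) b
      = lactAV k mulA ζV a (f (ζVinv v ⊗ₜ[k] ζBinv b)) := by
  simp [muOf, map_lift_assoc_symm]

lemma map_cancel (e₁ : AA ≃ₗ[k] AA) (e₂ : VV ≃ₗ[k] VV) (x : AA ⊗[k] VV) :
    TensorProduct.map e₁.toLinearMap e₂.toLinearMap
      (TensorProduct.map e₁.symm.toLinearMap e₂.symm.toLinearMap x) = x := by
  induction x using TensorProduct.induction_on with
  | zero => simp
  | tmul a v => simp
  | add x y hx hy => simp [map_add, hx, hy]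

lemma map_cancel' (e₁ : AA ≃ₗ[k] AA) (e₂ : VV ≃ₗ[k] VV) (x : AA ⊗[k] VV) :
    TensorProduct.map e₁.symm.toLinearMap e₂.symm.toLinearMap
      (TensorProduct.map e₁.toLinearMap e₂.toLinearMap x) = x := by
  induction x using TensorProduct.induction_on with
  | zero => simp
  | tmul a v => simp
  | add x y hx hy => simp [map_add, hx, hy]

lemma map_lactAV (mulA : AA →ₗ[k] AA →ₗ[k] AA) (zA : AA →ₗ[k] AA) (ζV : VV →ₗ[k] VV)
    (hmul : ∀ x y, zA (mulA x y) = mulA (zA x) (zA y)) (a : AA) (y : AA ⊗[k] VV) :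
    TensorProduct.map zA ζV (lactAV k mulA ζV a y)
      = lactAV k mulA ζV (zA a) (TensorProduct.map zA ζV y) := by
  induction y using TensorProduct.induction_on with
  | zero => simp
  | tmul a' v => simp [lactAV_tmul, hmul]
  | add x y hx hy => simp [map_add, hx, hy]

lemma lactAV_hom_assoc (mulA : AA →ₗ[k] AA →ₗ[k] AA) (zA : AA →ₗ[k] AA) (ζV : VV →ₗ[k] VV)
    (hassoc : ∀ a b c, mulA (zA a) (mulA b c) = mulA (mulA a b) (zA c))
    (a a' : AA) (y : AA ⊗[k] VV) :
    lactAV k mulA ζV (zA a) (lactAV k mulA ζV a' y)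
      = lactAV k mulA ζV (mulA a a') (TensorProduct.map zA ζV y) := by
  induction y using TensorProduct.induction_on with
  | zero => simp
  | tmul a'' v => simp [lactAV_tmul, hassoc]
  | add x y hx hy => simp [map_add, hx, hy]

lemma lactAV_one (mulA : AA →ₗ[k] AA →ₗ[k] AA) (oneA : AA) (zA : AA →ₗ[k] AA)
    (ζV : VV →ₗ[k] VV) (hone : ∀ a, mulA oneA a = zA a) (y : AA ⊗[k] VV) :
    lactAV k mulA ζV oneA y = TensorProduct.map zA ζV y := by
  induction y using TensorProduct.induction_on with
  | zero => simp
  | tmul a v => simp [lactAV_tmul, hone]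
  | add x y hx hy => simp [map_add, hx, hy]

lemma condI_iff (mulA : AA →ₗ[k] AA →ₗ[k] AA) (mulB : BB →ₗ[k] BB →ₗ[k] BB)
    (ζV ζVinv : VV →ₗ[k] VV) (f : VV ⊗[k] BB →ₗ[k] AA ⊗[k] VV) :
    condI k mulA mulB ζV ζVinv f ↔
      ∀ (v : VV) (b b' : BB),
        muOf k mulA ζV ζVinv LinearMap.id f (f (v ⊗ₜ[k] b)) b'
          = f (ζV v ⊗ₜ[k] mulB b b') := by
  have key : ∀ (x : AA ⊗[k] VV) (b' : BB),
      ((TensorProduct.map (TensorProduct.lift mulA) ζV).comp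
        ((TensorProduct.assoc k AA AA VV).symm.toLinearMap.comp
          ((TensorProduct.map LinearMap.id f).comp
            ((TensorProduct.map LinearMap.id (TensorProduct.map ζVinv LinearMap.id)).comp
              (TensorProduct.assoc k AA VV BB).toLinearMap)))) (x ⊗ₜ[k] b')
        = muOf k mulA ζV ζVinv LinearMap.id f x b' := by
    intro x b'
    simp [muOf]
  constructor
  · intro h v b b'
    have h' := LinearMap.congr_fun h ((v ⊗ₜ[k] b) ⊗ₜ[k] b')
    simp only [LinearMap.comp_apply, TensorProduct.map_tmul, LinearMap.id_coe, id_eq,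
      LinearEquiv.coe_coe, TensorProduct.assoc_tmul, TensorProduct.lift.tmul] at h'
    rw [← h']
    exact (key (f (v ⊗ₜ[k] b)) b').symm
  · intro h
    unfold condI
    ext v b b'
    simp only [LinearMap.comp_apply, TensorProduct.map_tmul, LinearMap.id_coe, id_eq,
      LinearEquiv.coe_coe, TensorProduct.assoc_tmul, TensorProduct.lift.tmul,
      TensorProduct.AlgebraTensorModule.curry_apply, TensorProduct.curry_apply,
      LinearMap.coe_restrictScalars]
    rw [show (TensorProduct.map (TensorProduct.lift mulA) ζV)
        ((TensorProduct.assoc k AA AA VV).symm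
          ((TensorProduct.map LinearMap.id f)
            ((TensorProduct.map LinearMap.id (TensorProduct.map ζVinv LinearMap.id))
              ((TensorProduct.assoc k AA VV BB) ((f (v ⊗ₜ[k] b)) ⊗ₜ[k] b')))))
        = muOf k mulA ζV ζVinv LinearMap.id f (f (v ⊗ₜ[k] b)) b' from
          by simpa using key (f (v ⊗ₜ[k] b)) b']
    exact h v b b'

end Aux

set_option maxHeartbeats 1000000 in

/-- bijection between right `B`-module structures making `A ⊗ V` an
`(A,B)`-bimodule and maps `f : V ⊗ B → A ⊗ V` satisfying (i), (ii), (iii). -/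
theorem bimodule_structures_biject
    (AA BB VV : Type) [AddCommGroup AA] [Module k AA] [AddCommGroup BB] [Module k BB]
    [AddCommGroup VV] [Module k VV]
    (A' : HomAlg k AA) (B' : HomAlg k BB)
    (ζAe : AA ≃ₗ[k] AA) (hA : ζAe.toLinearMap = A'.zmap)
    (ζBe : BB ≃ₗ[k] BB) (hB : ζBe.toLinearMap = B'.zmap)
    (ζVe : VV ≃ₗ[k] VV) :
    (∀ μ : (AA ⊗[k] VV) →ₗ[k] BB →ₗ[k] (AA ⊗[k] VV),
      IsRModOf k B'.mul B'.one B'.zmap (TensorProduct.map A'.zmap ζVe.toLinearMap) μ →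
      (∀ (a : AA) (x : AA ⊗[k] VV) (b : BB),
        lactAV k A'.mul ζVe.toLinearMap (A'.zmap a) (μ x b)
          = μ (lactAV k A'.mul ζVe.toLinearMap a x) (B'.zmap b)) →
      (condI k A'.mul B'.mul ζVe.toLinearMap ζVe.symm.toLinearMap (fOf k A'.one μ) ∧
       (∀ v : VV, fOf k A'.one μ (v ⊗ₜ[k] B'.one) = A'.one ⊗ₜ[k] ζVe.toLinearMap v) ∧
       (fOf k A'.one μ).comp
           (TensorProduct.map ζVe.symm.toLinearMap ζBe.symm.toLinearMap)
         = (TensorProduct.map ζAe.symm.toLinearMap ζVe.symm.toLinearMap).comp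
             (fOf k A'.one μ)) ∧
      μ = muOf k A'.mul ζVe.toLinearMap ζVe.symm.toLinearMap ζBe.symm.toLinearMap
            (fOf k A'.one μ)) ∧
    (∀ f : VV ⊗[k] BB →ₗ[k] AA ⊗[k] VV,
      condI k A'.mul B'.mul ζVe.toLinearMap ζVe.symm.toLinearMap f →
      (∀ v : VV, f (v ⊗ₜ[k] B'.one) = A'.one ⊗ₜ[k] ζVe.toLinearMap v) →
      f.comp (TensorProduct.map ζVe.symm.toLinearMap ζBe.symm.toLinearMap)
        = (TensorProduct.map ζAe.symm.toLinearMap ζVe.symm.toLinearMap).comp f →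
      (IsRModOf k B'.mul B'.one B'.zmap (TensorProduct.map A'.zmap ζVe.toLinearMap)
          (muOf k A'.mul ζVe.toLinearMap ζVe.symm.toLinearMap ζBe.symm.toLinearMap f) ∧
       (∀ (a : AA) (x : AA ⊗[k] VV) (b : BB),
         lactAV k A'.mul ζVe.toLinearMap (A'.zmap a)
             (muOf k A'.mul ζVe.toLinearMap ζVe.symm.toLinearMap ζBe.symm.toLinearMap f x b)
           = muOf k A'.mul ζVe.toLinearMap ζVe.symm.toLinearMap ζBe.symm.toLinearMap f
               (lactAV k A'.mul ζVe.toLinearMap a x) (B'.zmap b))) ∧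
      f = fOf k A'.one
            (muOf k A'.mul ζVe.toLinearMap ζVe.symm.toLinearMap ζBe.symm.toLinearMap f)) := by
  have haA : ∀ a, ζAe a = A'.zmap a := fun a => by rw [← hA]; rfl
  have haAi : ∀ a, A'.zmap (ζAe.symm a) = a := fun a => by
    rw [← haA, ζAe.apply_symm_apply]
  have hbB : ∀ b, ζBe b = B'.zmap b := fun b => by rw [← hB]; rfl
  have hbBi : ∀ b, B'.zmap (ζBe.symm b) = b := fun b => by
    rw [← hbB, ζBe.apply_symm_apply]
  have hbBi' : ∀ b, ζBe.symm (B'.zmap b) = b := fun b => by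
    rw [← hbB, ζBe.symm_apply_apply]
  have hBone : ζBe.symm B'.one = B'.one := by
    conv_lhs => rw [← B'.zmap_one, ← hbB, ζBe.symm_apply_apply]
  have hBmulinv : ∀ x y, ζBe.symm (B'.mul x y) = B'.mul (ζBe.symm x) (ζBe.symm y) := by
    intro x y
    have h := B'.zmap_mul (ζBe.symm x) (ζBe.symm y)
    rw [hbBi, hbBi] at h
    rw [← h, hbBi']
  constructor
  · -- direction 1
    intro μ hm hc
    have hf : ∀ v b, fOf k A'.one μ (v ⊗ₜ[k] b) = μ (A'.one ⊗ₜ[k] v) b :=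
      fun v b => fOf_tmul k A'.one μ v b
    have hrec : ∀ (a : AA) (v : VV) (b : BB),
        μ (a ⊗ₜ[k] v) b
          = lactAV k A'.mul ζVe.toLinearMap a
              (μ (A'.one ⊗ₜ[k] ζVe.symm v) (ζBe.symm b)) := by
      intro a v b
      have h := hc (ζAe.symm a) (A'.one ⊗ₜ[k] (ζVe.symm v)) (ζBe.symm b)
      rw [haAi, hbBi, lactAV_tmul, A'.mul_one, haAi] at h
      simp only [LinearEquiv.coe_coe, LinearEquiv.apply_symm_apply] at h
      exact h.symm
    refine ⟨⟨?_, ?_, ?_⟩, ?_⟩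
    · -- condition (i)
      rw [condI_iff]
      intro v b b'
      have key : ∀ (y : AA ⊗[k] VV) (b' : BB),
          muOf k A'.mul ζVe.toLinearMap ζVe.symm.toLinearMap LinearMap.id
              (fOf k A'.one μ) y b' = μ y (B'.zmap b') := by
        intro y b'
        induction y using TensorProduct.induction_on with
        | zero => simp
        | tmul a' v' =>
            rw [muOf_tmul, hrec a' v' (B'.zmap b'), hbBi']
            simp [hf, fOf_tmul]
        | add x y hx hy => simp [map_add, LinearMap.add_apply, hx, hy]
      rw [key, hf, hf]
      have h := hm.assoc (A'.one ⊗ₜ[k] v) b b'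
      rw [h]
      simp only [TensorProduct.map_tmul, A'.zmap_one]
    · -- condition (ii)
      intro v
      rw [hf]
      have h := hm.act_one (A'.one ⊗ₜ[k] v)
      rw [h]
      simp [A'.zmap_one]
    · -- condition (iii)
      apply TensorProduct.ext'
      intro v b
      simp only [LinearMap.comp_apply, TensorProduct.map_tmul, LinearEquiv.coe_coe]
      rw [hf, hf]
      have h := hm.zeta_act (A'.one ⊗ₜ[k] ζVe.symm v) (ζBe.symm b)
      rw [hbBi] at h
      simp only [TensorProduct.map_tmul, A'.zmap_one, LinearEquiv.coe_coe] at h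
      rw [ζVe.apply_symm_apply] at h
      rw [← h, ← hA]
      exact (map_cancel' k ζAe ζVe _).symm
    · -- reconstruction
      refine LinearMap.ext fun x => LinearMap.ext fun b => ?_
      induction x using TensorProduct.induction_on with
      | zero => simp
      | tmul a v =>
          rw [muOf_tmul, hrec a v b]
          simp [hf, fOf_tmul]
      | add x y hx hy => simp [map_add, LinearMap.add_apply, hx, hy]
  · -- direction 2
    intro f hf1 hf2 hf3
    have h3' : ∀ v b,
        TensorProduct.map A'.zmap ζVe.toLinearMap
          (f (ζVe.symm v ⊗ₜ[k] ζBe.symm b)) = f (v ⊗ₜ[k] b) := by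
      intro v b
      have h := LinearMap.congr_fun hf3 (v ⊗ₜ[k] b)
      simp only [LinearMap.comp_apply, TensorProduct.map_tmul, LinearEquiv.coe_coe] at h
      rw [h, ← hA]
      exact map_cancel k ζAe ζVe _
    have hμ : ∀ (a : AA) (v : VV) (b : BB),
        muOf k A'.mul ζVe.toLinearMap ζVe.symm.toLinearMap ζBe.symm.toLinearMap f
            (a ⊗ₜ[k] v) b
          = lactAV k A'.mul ζVe.toLinearMap a (f (ζVe.symm v ⊗ₜ[k] ζBe.symm b)) := by
      intro a v b
      rw [muOf_tmul]
      simp only [LinearEquiv.coe_coe]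
    have hptI := (condI_iff k A'.mul B'.mul ζVe.toLinearMap ζVe.symm.toLinearMap f).mp hf1
    have hkey : ∀ (c : AA) (y : AA ⊗[k] VV) (b : BB),
        muOf k A'.mul ζVe.toLinearMap ζVe.symm.toLinearMap ζBe.symm.toLinearMap f
            (lactAV k A'.mul ζVe.toLinearMap c y) (B'.zmap b)
          = lactAV k A'.mul ζVe.toLinearMap (A'.zmap c)
              (muOf k A'.mul ζVe.toLinearMap ζVe.symm.toLinearMap LinearMap.id f y
                (ζBe.symm b)) := by
      intro c y b
      induction y using TensorProduct.induction_on with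
      | zero => simp
      | tmul a' v' =>
          rw [lactAV_tmul, hμ, muOf_tmul,
            lactAV_hom_assoc k A'.mul A'.zmap ζVe.toLinearMap A'.hom_assoc]
          simp only [LinearEquiv.coe_coe, LinearEquiv.symm_apply_apply, hbBi',
            LinearMap.id_coe, id_eq]
          rw [h3']
      | add x y hx hy => simp [map_add, LinearMap.add_apply, hx, hy]
    refine ⟨⟨?_, ?_⟩, ?_⟩
    · -- IsRModOf
      refine ⟨?_, ?_, ?_⟩
      · -- assoc
        intro m a b
        induction m using TensorProduct.induction_on with
        | zero => simp
        | tmul a₀ v₀ =>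
            rw [hμ, hkey, TensorProduct.map_tmul, hμ]
            have h := hptI (ζVe.symm v₀) (ζBe.symm a) (ζBe.symm b)
            simp only [LinearEquiv.coe_coe, LinearEquiv.apply_symm_apply,
              LinearEquiv.symm_apply_apply] at h ⊢
            rw [hBmulinv, h]
        | add x y hx hy => simp [map_add, LinearMap.add_apply, hx, hy]
      · -- zeta_act
        intro m b
        induction m using TensorProduct.induction_on with
        | zero => simp
        | tmul a v =>
            rw [hμ, TensorProduct.map_tmul, hμ,
              map_lactAV k A'.mul A'.zmap ζVe.toLinearMap A'.zmap_mul, h3']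
            simp only [LinearEquiv.coe_coe, LinearEquiv.symm_apply_apply, hbBi']
        | add x y hx hy => simp [map_add, LinearMap.add_apply, hx, hy]
      · -- act_one
        intro m
        induction m using TensorProduct.induction_on with
        | zero => simp
        | tmul a v =>
            rw [hμ, hBone, hf2, lactAV_tmul, A'.mul_one]
            simp only [LinearEquiv.coe_coe, LinearEquiv.apply_symm_apply,
              TensorProduct.map_tmul]
        | add x y hx hy => simp [map_add, hx, hy]
    · -- bimodule compatibility
      intro a x b
      induction x using TensorProduct.induction_on with
      | zero => simp
      | tmul a' v' =>
          rw [hμ, lactAV_tmul, hμ,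
            lactAV_hom_assoc k A'.mul A'.zmap ζVe.toLinearMap A'.hom_assoc, h3']
          simp only [LinearEquiv.coe_coe, LinearEquiv.symm_apply_apply, hbBi']
      | add x y hx hy => simp [map_add, LinearMap.add_apply, hx, hy]
    · -- f = fOf μ
      apply TensorProduct.ext'
      intro v b
      rw [fOf_tmul, hμ,
        lactAV_one k A'.mul A'.one A'.zmap ζVe.toLinearMap A'.one_mul, h3']

end HomHopf
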